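/- arXiv:0804.0737 — 2 statements merged into one kernel-verified Lean document; each statement's English description precedes it below -/
import Mathlib

section
/- Let 0 < δ < 1, p ≥ 1, and let {Z_t} be i.i.d. nonnegative random variables with E Z_t = 1. Let a = (a_0, …, a_p) and ā = (ā_0, …, ā_p) be two nonnegative coefficient vectors each with coefficient sums Σ_{j=1}^p a_j ≤ 1−δ and Σ_{j=1}^p ā_j ≤ 1−δ. Let X_t² and X̄_t² denote the corresponding Volterra series solutions driven by the same innovations {Z_t}. Then E|X_t² − X̄_t²| ≤ C |ā − a| Σ_{k=1}^∞ k²(1−δ)^k for some constant C depending only on p, δ and max(a_0, ā_0). -/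
open MeasureTheory Finset ProbabilityTheory

/-- The `k`-th order term of the Volterra series of a stationary ARCH process. -/
noncomputable def volterraTerm {Ω : Type*} [MeasurableSpace Ω]
    (a : ℕ → ℝ) (Z : ℤ → Ω → ℝ) (t : ℤ) (k : ℕ) (ω : Ω) : ℝ :=
  ∑' g : Fin k → ℕ+,
    (a 0 * ∏ i : Fin k, a (g i)) *
      ∏ i : Fin k, Z (t - ∑ l ∈ Finset.Iic i, (g l : ℕ)) ω

/-- The Volterra series solution `X_t²` of a stationary ARCH process. -/
noncomputable def volterra {Ω : Type*} [MeasurableSpace Ω]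
    (a : ℕ → ℝ) (Z : ℤ → Ω → ℝ) (t : ℤ) (ω : Ω) : ℝ :=
  ∑' k : ℕ, volterraTerm a Z t k ω

def Pfin (p : ℕ) : Finset ℕ+ := (Finset.range p).image Nat.succPNat

lemma mem_Pfin {p : ℕ} {x : ℕ+} : x ∈ Pfin p ↔ (x:ℕ) ≤ p := by
  rw [Pfin, Finset.mem_image]
  obtain ⟨n, hn⟩ := x
  simp only [Finset.mem_range]
  constructor
  · rintro ⟨i, hi, h⟩
    have : i + 1 = n := congrArg (fun y : ℕ+ => (y:ℕ)) h
    show n ≤ p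
    omega
  · intro hx
    have hx' : n ≤ p := hx
    refine ⟨n - 1, by omega, PNat.coe_injective ?_⟩
    show n - 1 + 1 = n
    omega

lemma sum_Pfin (p : ℕ) (F : ℕ → ℝ) :
    ∑ x ∈ Pfin p, F (x:ℕ) = ∑ j ∈ Icc 1 p, F j := by
  rw [Pfin, Finset.sum_image (by intro i _ j _ h; simpa [PNat.mk_ofNat] using congrArg (fun x : ℕ+ => (x:ℕ)) h)]
  rw [show Finset.Icc 1 p = (Finset.range p).image (fun i => i+1) by
    ext j
    rw [Finset.mem_Icc]
    simp only [Finset.mem_image, Finset.mem_range]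
    constructor
    · rintro ⟨h1, h2⟩; exact ⟨j - 1, by omega, by omega⟩
    · rintro ⟨i, hi, rfl⟩; omega]
  rw [Finset.sum_image (by intro i _ j _ h; simp only at h; omega)]
  rfl

lemma tau_injective {k : ℕ} (t : ℤ) (g : Fin k → ℕ+) :
    Function.Injective (fun i : Fin k => t - (∑ l ∈ Finset.Iic i, (g l : ℕ) : ℕ)) := by
  have hmono : StrictMono (fun i : Fin k => ∑ l ∈ Finset.Iic i, (g l : ℕ)) := by
    intro i i' hii
    apply Finset.sum_lt_sum_of_subset (Finset.Iic_subset_Iic.mpr hii.le)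
      (Finset.mem_Iic.mpr le_rfl) (by simp [Finset.mem_Iic, not_le.mpr hii]) (g i').2
    intro l _ _
    exact Nat.zero_le _
  intro i i' h
  simp only [sub_right_inj, Nat.cast_inj] at h
  exact hmono.injective h

lemma volterraTerm_eq_sum {Ω : Type*} [MeasurableSpace Ω] (p : ℕ)
    (b : ℕ → ℝ) (hb : ∀ j, p < j → b j = 0) (Z : ℤ → Ω → ℝ) (t : ℤ) (k : ℕ) (ω : Ω) :
    volterraTerm b Z t k ω
      = ∑ g ∈ Fintype.piFinset (fun _ : Fin k => Pfin p),
          (b 0 * ∏ i : Fin k, b (g i)) *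
            ∏ i : Fin k, Z (t - ∑ l ∈ Finset.Iic i, (g l : ℕ)) ω := by
  apply tsum_eq_sum
  intro g hg
  rw [Fintype.mem_piFinset] at hg
  push_neg at hg
  obtain ⟨i, hi⟩ := hg
  rw [mem_Pfin] at hi
  push_neg at hi
  have : b (g i) = 0 := hb _ hi
  rw [Finset.prod_eq_zero (Finset.mem_univ i) this]
  ring

lemma iIndepFun_comp_of_injective {Ω ι ι' β : Type*} [MeasurableSpace Ω]
    {mβ : MeasurableSpace β} {μ : Measure Ω} {f : ι → Ω → β}
    (h : iIndepFun f μ) (τ : ι' → ι) (hτ : Function.Injective τ) :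
    iIndepFun (fun i => f (τ i)) μ := by
  classical
  rw [iIndepFun_iff_measure_inter_preimage_eq_mul] at h ⊢
  intro S sets hsets
  have hfilter : ∀ i₀ ∈ S, S.filter (fun i => τ i = τ i₀) = {i₀} := by
    intro i₀ h₀
    ext i
    simp only [mem_filter, mem_singleton]
    constructor
    · rintro ⟨-, hi⟩; exact hτ hi
    · rintro rfl; exact ⟨h₀, rfl⟩
  have key := h (S.image τ)
      (sets := fun j => ⋂ i ∈ S.filter (fun i => τ i = j), sets i) ?_
  · have h1 : (⋂ j ∈ S.image τ, f j ⁻¹' (⋂ i ∈ S.filter (fun i => τ i = j), sets i))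
        = ⋂ i ∈ S, (fun ω => f (τ i) ω) ⁻¹' sets i := by
      rw [Finset.set_biInter_finset_image]
      apply Set.iInter₂_congr
      intro i hi
      rw [hfilter i hi]
      simp
    have h2 : (∏ j ∈ S.image τ, μ (f j ⁻¹' (⋂ i ∈ S.filter (fun i => τ i = j), sets i)))
        = ∏ i ∈ S, μ ((fun ω => f (τ i) ω) ⁻¹' sets i) := by
      rw [Finset.prod_image (fun i hi j hj hij => hτ hij)]
      apply Finset.prod_congr rfl
      intro i hi
      rw [hfilter i hi]
      simp
    rw [h1, h2] at key
    exact key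
  · intro j hj
    simp only [Finset.mem_image] at hj
    obtain ⟨i, hi, rfl⟩ := hj
    rw [hfilter i hi]
    simpa using hsets i hi

lemma integral_prod_Z {Ω : Type} [MeasurableSpace Ω] {μ : Measure Ω}
    [IsProbabilityMeasure μ] {Z : ℤ → Ω → ℝ} (hZm : ∀ t, Measurable (Z t))
    (hZpos : ∀ t ω, 0 ≤ Z t ω) (hZint : ∀ t, Integrable (Z t) μ)
    (hZmean : ∀ t, ∫ ω, Z t ω ∂μ = 1)
    (hZindep : iIndepFun Z μ)
    {k : ℕ} (τ : Fin k → ℤ) (hτ : Function.Injective τ) (s : Finset (Fin k)) :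
    Integrable (fun ω => ∏ i ∈ s, Z (τ i) ω) μ ∧ (∫ ω, ∏ i ∈ s, Z (τ i) ω ∂μ) = 1 := by
  classical
  have hind : iIndepFun (fun i => Z (τ i)) μ :=
    iIndepFun_comp_of_injective hZindep τ hτ
  induction s using Finset.cons_induction with
  | empty => simp
  | cons j s hj ih =>
    obtain ⟨ihInt, ihVal⟩ := ih
    set X : Ω → ℝ := fun ω => ∏ i ∈ s, Z (τ i) ω with hXdef
    have hXeq : X = ∏ i ∈ s, (fun ω => Z (τ i) ω) := by
      ext ω; simp [hXdef]
    have hIndep : IndepFun X (Z (τ j)) μ := by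
      rw [hXeq]
      exact hind.indepFun_finset_prod_of_notMem (fun i => hZm (τ i)) hj
    have hXm : Measurable X := Finset.measurable_prod s (fun i _ => hZm (τ i))
    have hXp : 0 ≤ X := fun ω => Finset.prod_nonneg (fun i _ => hZpos (τ i) ω)
    have hmul : (fun ω => ∏ i ∈ Finset.cons j s hj, Z (τ i) ω)
        = (X * fun ω => Z (τ j) ω) := by
      ext ω; simp [hXdef, Finset.prod_insert hj, mul_comm]
    constructor
    · rw [hmul]; exact hIndep.integrable_mul ihInt (hZint (τ j))
    · have := hIndep.integral_mul_eq_mul_integral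
        hXm.aestronglyMeasurable (hZm (τ j)).aestronglyMeasurable
      rw [hmul]
      show integral μ (X * fun ω => Z (τ j) ω) = 1
      rw [this]
      show (∫ ω, ∏ i ∈ s, Z (τ i) ω ∂μ) * (∫ ω, Z (τ j) ω ∂μ) = 1
      rw [ihVal, hZmean]; norm_num

lemma abs_prod_sub_prod_le (f g : ℕ → ℝ) (hf : ∀ i, 0 ≤ f i) (hg : ∀ i, 0 ≤ g i) (k : ℕ) :
    |(∏ j ∈ range k, f j) - ∏ j ∈ range k, g j|
      ≤ ∑ i ∈ range k, ∏ j ∈ range k,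
          (if j < i then g j else if j = i then |f j - g j| else f j) := by
  induction k with
  | zero => simp
  | succ k ih =>
    have hprodg : (0:ℝ) ≤ ∏ j ∈ range k, g j := Finset.prod_nonneg fun j _ => hg j
    have key : (∏ j ∈ range (k+1), f j) - ∏ j ∈ range (k+1), g j
        = ((∏ j ∈ range k, f j) - ∏ j ∈ range k, g j) * f k
          + (∏ j ∈ range k, g j) * (f k - g k) := by
      rw [Finset.prod_range_succ, Finset.prod_range_succ]; ring
    calc |(∏ j ∈ range (k+1), f j) - ∏ j ∈ range (k+1), g j|
        ≤ |(∏ j ∈ range k, f j) - ∏ j ∈ range k, g j| * f k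
          + (∏ j ∈ range k, g j) * |f k - g k| := by
          rw [key]
          refine (abs_add_le _ _).trans ?_
          rw [abs_mul, abs_mul, abs_of_nonneg (hf k), abs_of_nonneg hprodg]
      _ ≤ (∑ i ∈ range k, ∏ j ∈ range k,
            (if j < i then g j else if j = i then |f j - g j| else f j)) * f k
          + (∏ j ∈ range k, g j) * |f k - g k| := by
          have h := mul_le_mul_of_nonneg_right ih (hf k)
          linarith
      _ = ∑ i ∈ range (k+1), ∏ j ∈ range (k+1),
            (if j < i then g j else if j = i then |f j - g j| else f j) := by
          rw [Finset.sum_range_succ, Finset.sum_mul]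
          congr 1
          · refine Finset.sum_congr rfl fun i hi => ?_
            rw [Finset.prod_range_succ]
            congr 1
            have hik : i < k := Finset.mem_range.mp hi
            rw [if_neg (by omega), if_neg (by omega)]
          · rw [Finset.prod_range_succ, if_neg (lt_irrefl k), if_pos rfl]
            congr 1
            refine Finset.prod_congr rfl fun j hj => ?_
            rw [if_pos (Finset.mem_range.mp hj)]

lemma delta_bound_aux (p : ℕ) (ε d : ℝ) (hε0 : 0 ≤ ε) (hd0 : 0 ≤ d)
    (a abar : ℕ → ℝ) (ha : ∀ x : ℕ+, 0 ≤ a (x:ℕ)) (hb : ∀ x : ℕ+, 0 ≤ abar (x:ℕ))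
    (hsa : ∑ x ∈ Pfin p, a (x:ℕ) ≤ ε) (hsb : ∑ x ∈ Pfin p, abar (x:ℕ) ≤ ε)
    (hdiff : ∀ x : ℕ+, x ∈ Pfin p → |a (x:ℕ) - abar (x:ℕ)| ≤ d)
    (hd00 : |a 0 - abar 0| ≤ d) (habar0 : 0 ≤ abar 0) (k : ℕ) :
    ∑ g ∈ Fintype.piFinset (fun _ : Fin k => Pfin p),
        |a 0 * (∏ i : Fin k, a ((g i):ℕ)) - abar 0 * ∏ i : Fin k, abar ((g i):ℕ)|
      ≤ d * ε^k + abar 0 * ((k : ℝ) * ((p:ℝ) * d * ε^(k-1))) := by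
  classical
  set G := Fintype.piFinset (fun _ : Fin k => Pfin p) with hG
  -- the "matrix" for the telescoping bound
  set H : ℕ → Fin k → ℕ+ → ℝ := fun i j x =>
    if (j:ℕ) < i then abar (x:ℕ) else if (j:ℕ) = i then |a (x:ℕ) - abar (x:ℕ)| else a (x:ℕ)
    with hH
  have hHnn : ∀ i (j : Fin k) (x : ℕ+), 0 ≤ H i j x := by
    intro i j x
    simp only [hH]
    split_ifs
    · exact hb x
    · exact abs_nonneg _
    · exact ha x
  -- pointwise bound for a fixed g
  have hpt : ∀ g ∈ G,
      |a 0 * (∏ i : Fin k, a ((g i):ℕ)) - abar 0 * ∏ i : Fin k, abar ((g i):ℕ)|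
        ≤ |a 0 - abar 0| * (∏ i : Fin k, a ((g i):ℕ))
          + abar 0 * ∑ i ∈ range k, ∏ j : Fin k, H i j (g j) := by
    intro g _
    set gext : ℕ → ℕ+ := fun j => if h : j < k then g ⟨j, h⟩ else 1 with hgext
    have hconvA : (∏ i : Fin k, a ((g i):ℕ)) = ∏ j ∈ range k, a ((gext j : ℕ)) := by
      rw [← Fin.prod_univ_eq_prod_range (fun j => a ((gext j : ℕ))) k]
      refine Finset.prod_congr rfl fun i _ => ?_
      simp [hgext, i.isLt]
    have hconvB : (∏ i : Fin k, abar ((g i):ℕ)) = ∏ j ∈ range k, abar ((gext j : ℕ)) := by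
      rw [← Fin.prod_univ_eq_prod_range (fun j => abar ((gext j : ℕ))) k]
      refine Finset.prod_congr rfl fun i _ => ?_
      simp [hgext, i.isLt]
    have hAnn : (0:ℝ) ≤ ∏ i : Fin k, a ((g i):ℕ) :=
      Finset.prod_nonneg fun i _ => ha _
    have halg : a 0 * (∏ i : Fin k, a ((g i):ℕ)) - abar 0 * ∏ i : Fin k, abar ((g i):ℕ)
        = (a 0 - abar 0) * (∏ i : Fin k, a ((g i):ℕ))
          + abar 0 * ((∏ i : Fin k, a ((g i):ℕ)) - ∏ i : Fin k, abar ((g i):ℕ)) := by ring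
    have htel : |(∏ i : Fin k, a ((g i):ℕ)) - ∏ i : Fin k, abar ((g i):ℕ)|
        ≤ ∑ i ∈ range k, ∏ j : Fin k, H i j (g j) := by
      rw [hconvA, hconvB]
      refine (abs_prod_sub_prod_le (fun j => a ((gext j : ℕ))) (fun j => abar ((gext j : ℕ)))
        (fun j => ha _) (fun j => hb _) k).trans ?_
      refine le_of_eq (Finset.sum_congr rfl fun i _ => ?_)
      rw [← Fin.prod_univ_eq_prod_range
        (fun j => if j < i then abar ((gext j : ℕ)) else if j = i then
          |a ((gext j : ℕ)) - abar ((gext j : ℕ))| else a ((gext j : ℕ))) k]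
      refine Finset.prod_congr rfl fun j _ => ?_
      have : gext (j:ℕ) = g j := by simp [hgext, j.isLt]
      simp only [this, hH]
    calc |a 0 * (∏ i : Fin k, a ((g i):ℕ)) - abar 0 * ∏ i : Fin k, abar ((g i):ℕ)|
        ≤ |(a 0 - abar 0) * (∏ i : Fin k, a ((g i):ℕ))|
          + |abar 0 * ((∏ i : Fin k, a ((g i):ℕ)) - ∏ i : Fin k, abar ((g i):ℕ))| := by
          rw [halg]; exact abs_add_le _ _
      _ = |a 0 - abar 0| * (∏ i : Fin k, a ((g i):ℕ))
          + abar 0 * |(∏ i : Fin k, a ((g i):ℕ)) - ∏ i : Fin k, abar ((g i):ℕ)| := by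
          rw [abs_mul, abs_mul, abs_of_nonneg hAnn, abs_of_nonneg habar0]
      _ ≤ |a 0 - abar 0| * (∏ i : Fin k, a ((g i):ℕ))
          + abar 0 * ∑ i ∈ range k, ∏ j : Fin k, H i j (g j) := by
          have := mul_le_mul_of_nonneg_left htel habar0
          linarith
  -- summing the pointwise bound
  have hsum1 : ∑ g ∈ G, |a 0 - abar 0| * (∏ i : Fin k, a ((g i):ℕ)) ≤ d * ε^k := by
    rw [← Finset.mul_sum, ← Finset.prod_univ_sum (fun _ : Fin k => Pfin p)
      (fun _ x => a (x:ℕ))]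
    rw [Finset.prod_const, Finset.card_univ, Fintype.card_fin]
    have h1 : (∑ x ∈ Pfin p, a (x:ℕ))^k ≤ ε^k :=
      pow_le_pow_left₀ (Finset.sum_nonneg fun x _ => ha x) hsa k
    have h2 : (0:ℝ) ≤ (∑ x ∈ Pfin p, a (x:ℕ))^k :=
      pow_nonneg (Finset.sum_nonneg fun x _ => ha x) k
    calc |a 0 - abar 0| * (∑ x ∈ Pfin p, a (x:ℕ))^k ≤ d * (∑ x ∈ Pfin p, a (x:ℕ))^k :=
          mul_le_mul_of_nonneg_right hd00 h2
      _ ≤ d * ε^k := mul_le_mul_of_nonneg_left h1 hd0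
  have hsum2 : ∀ i ∈ range k, ∑ g ∈ G, ∏ j : Fin k, H i j (g j)
      ≤ (p:ℝ) * d * ε^(k-1) := by
    intro i hi
    have hik : i < k := Finset.mem_range.mp hi
    rw [← Finset.prod_univ_sum (fun _ : Fin k => Pfin p) (fun j x => H i j x)]
    set c : Fin k → ℝ := fun j => ∑ x ∈ Pfin p, H i j x with hc
    have hcnn : ∀ j, 0 ≤ c j := fun j => Finset.sum_nonneg fun x _ => hHnn i j x
    have hcle : ∀ j : Fin k, (j:ℕ) ≠ i → c j ≤ ε := by
      intro j hj
      rcases lt_or_gt_of_ne hj with h | h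
      · calc c j = ∑ x ∈ Pfin p, abar (x:ℕ) := by
              refine Finset.sum_congr rfl fun x _ => ?_
              simp only [hH, if_pos h]
          _ ≤ ε := hsb
      · calc c j = ∑ x ∈ Pfin p, a (x:ℕ) := by
              refine Finset.sum_congr rfl fun x _ => ?_
              simp only [hH, if_neg (by omega : ¬ (j:ℕ) < i), if_neg (by omega : ¬ (j:ℕ) = i)]
          _ ≤ ε := hsa
    set i' : Fin k := ⟨i, hik⟩ with hi'
    have hci' : c i' ≤ (p:ℝ) * d := by
      have : c i' = ∑ x ∈ Pfin p, |a (x:ℕ) - abar (x:ℕ)| := by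
        refine Finset.sum_congr rfl fun x _ => ?_
        simp [hH, hi']
      rw [this]
      calc ∑ x ∈ Pfin p, |a (x:ℕ) - abar (x:ℕ)| ≤ ∑ _x ∈ Pfin p, d :=
            Finset.sum_le_sum fun x hx => hdiff x hx
        _ = (Pfin p).card * d := by rw [Finset.sum_const, nsmul_eq_mul]
        _ ≤ (p:ℝ) * d := by
            have : (Pfin p).card ≤ p := le_trans Finset.card_image_le (by simp)
            exact mul_le_mul_of_nonneg_right (by exact_mod_cast this) hd0
    have herase : ∏ j ∈ Finset.univ.erase i', c j ≤ ε^(k-1) := by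
      have hcard : (Finset.univ.erase i').card = k - 1 := by
        rw [Finset.card_erase_of_mem (Finset.mem_univ i'), Finset.card_univ, Fintype.card_fin]
      calc ∏ j ∈ Finset.univ.erase i', c j ≤ ∏ _j ∈ Finset.univ.erase i', ε := by
            refine Finset.prod_le_prod (fun j _ => hcnn j) fun j hj => ?_
            exact hcle j (by
              intro hcontra
              exact (Finset.mem_erase.mp hj).1 (Fin.ext hcontra))
        _ = ε^(k-1) := by rw [Finset.prod_const, hcard]
    calc ∏ j : Fin k, c j = c i' * ∏ j ∈ Finset.univ.erase i', c j :=
          (Finset.mul_prod_erase _ _ (Finset.mem_univ i')).symm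
      _ ≤ ((p:ℝ) * d) * ε^(k-1) := by
          apply mul_le_mul hci' herase (Finset.prod_nonneg fun j _ => hcnn j)
            (mul_nonneg (Nat.cast_nonneg p) hd0)
  calc ∑ g ∈ G, |a 0 * (∏ i : Fin k, a ((g i):ℕ)) - abar 0 * ∏ i : Fin k, abar ((g i):ℕ)|
      ≤ ∑ g ∈ G, (|a 0 - abar 0| * (∏ i : Fin k, a ((g i):ℕ))
          + abar 0 * ∑ i ∈ range k, ∏ j : Fin k, H i j (g j)) :=
        Finset.sum_le_sum hpt
    _ = (∑ g ∈ G, |a 0 - abar 0| * (∏ i : Fin k, a ((g i):ℕ)))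
        + ∑ g ∈ G, abar 0 * ∑ i ∈ range k, ∏ j : Fin k, H i j (g j) :=
        Finset.sum_add_distrib
    _ ≤ d * ε^k + abar 0 * ((k : ℝ) * ((p:ℝ) * d * ε^(k-1))) := by
        have h2 : ∑ g ∈ G, abar 0 * ∑ i ∈ range k, ∏ j : Fin k, H i j (g j)
            ≤ abar 0 * ((k : ℝ) * ((p:ℝ) * d * ε^(k-1))) := by
          rw [← Finset.mul_sum]
          apply mul_le_mul_of_nonneg_left ?_ habar0
          rw [Finset.sum_comm]
          calc ∑ i ∈ range k, ∑ g ∈ G, ∏ j : Fin k, H i j (g j)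
              ≤ ∑ i ∈ range k, (p:ℝ) * d * ε^(k-1) := Finset.sum_le_sum hsum2
            _ = (k : ℝ) * ((p:ℝ) * d * ε^(k-1)) := by
                rw [Finset.sum_const, Finset.card_range, nsmul_eq_mul]
        linarith [hsum1]

lemma delta_final (δ M d : ℝ) (hδ0 : 0 < δ) (hδ1 : δ < 1) (hM : 0 < M) (hd0 : 0 ≤ d)
    (p : ℕ) (k : ℕ) (Δ : ℝ)
    (h : Δ ≤ d * (1-δ)^k + M * ((k:ℝ) * ((p:ℝ) * d * (1-δ)^(k-1)))) :
    Δ ≤ ((1 + M*(p:ℝ))/(1-δ)^2) * d * ((k:ℝ)+1)^2 * (1-δ)^(k+1) := by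
  have hε0 : (0:ℝ) < 1 - δ := by linarith
  have hε1 : 1 - δ < 1 := by linarith
  have hp0 : (0:ℝ) ≤ (p:ℝ) := Nat.cast_nonneg p
  cases k with
  | zero =>
    simp only [Nat.cast_zero, pow_zero, mul_one, zero_mul, mul_zero, add_zero] at h
    have hMp : (0:ℝ) ≤ M * (p:ℝ) := mul_nonneg hM.le hp0
    have hrhs : ((1 + M*(p:ℝ))/(1-δ)^2) * d * (((0:ℕ):ℝ)+1)^2 * (1-δ)^(0+1)
        = (1 + M*(p:ℝ)) * d / (1-δ) := by
      push_cast
      field_simp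
      ring
    rw [hrhs, le_div_iff₀ hε0]
    nlinarith [mul_nonneg hd0 hδ0.le, mul_nonneg hMp hd0,
      mul_nonneg (sub_nonneg.mpr h) hε0.le]
  | succ m =>
    have hεm : (0:ℝ) ≤ (1-δ)^m := by positivity
    have hMpd : (0:ℝ) ≤ M * (p:ℝ) * d := mul_nonneg (mul_nonneg hM.le hp0) hd0
    have h' : Δ ≤ d*(1-δ)^(m+1) + M*(((m:ℝ)+1)*((p:ℝ)*d*(1-δ)^m)) := by
      push_cast at h
      simpa using h
    have hm0 : (0:ℝ) ≤ (m:ℝ) := Nat.cast_nonneg m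
    have hq : ((m:ℝ)+1) ≤ ((m:ℝ)+1+1)^2 := by nlinarith
    have hq1 : (1-δ) ≤ ((m:ℝ)+1+1)^2 := by nlinarith
    have hcoef : d * (1-δ) + M * (((m:ℝ)+1) * ((p:ℝ) * d))
        ≤ (1 + M*(p:ℝ)) * d * (((m:ℝ)+1)+1)^2 := by
      have hA : d*(1-δ) ≤ d*((m:ℝ)+1+1)^2 := mul_le_mul_of_nonneg_left hq1 hd0
      have hB : ((m:ℝ)+1)*(M*(p:ℝ)*d) ≤ ((m:ℝ)+1+1)^2*(M*(p:ℝ)*d) :=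
        mul_le_mul_of_nonneg_right hq hMpd
      nlinarith [hA, hB]
    have key : d * (1-δ)^(m+1) + M * (((m:ℝ)+1) * ((p:ℝ) * d * (1-δ)^m))
        ≤ ((1 + M*(p:ℝ))/(1-δ)^2) * d * (((m:ℝ)+1)+1)^2 * (1-δ)^(m+2) := by
      have hrhs : ((1 + M*(p:ℝ))/(1-δ)^2) * d * (((m:ℝ)+1)+1)^2 * (1-δ)^(m+2)
          = (1 + M*(p:ℝ)) * d * (((m:ℝ)+1)+1)^2 * (1-δ)^m := by
        rw [show m + 2 = m + 1 + 1 by ring, pow_succ, pow_succ]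
        field_simp
        ring
      rw [hrhs, pow_succ]
      nlinarith [mul_le_mul_of_nonneg_right hcoef hεm]
    have hgoal : ((1 + M*(p:ℝ))/(1-δ)^2) * d * (((m+1:ℕ):ℝ)+1)^2 * (1-δ)^(m+1+1)
        = ((1 + M*(p:ℝ))/(1-δ)^2) * d * (((m:ℝ)+1)+1)^2 * (1-δ)^(m+2) := by
      push_cast
      ring
    rw [hgoal]
    exact h'.trans key

lemma summable_ksq_geom (ε : ℝ) (h0 : 0 ≤ ε) (h1 : ε < 1) :
    Summable (fun k : ℕ => ((k:ℝ)+1)^2 * ε^(k+1)) := by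
  have hnorm : ‖ε‖ < 1 := by rwa [Real.norm_eq_abs, abs_of_nonneg h0]
  have ha := summable_pow_mul_geometric_of_norm_lt_one 2 hnorm
  have hb := summable_pow_mul_geometric_of_norm_lt_one 1 hnorm
  have hc := summable_geometric_of_lt_one h0 h1
  have h2 : Summable (fun k : ℕ => ((k:ℝ)+1)^2 * ε^k) := by
    have := (ha.add ((hb.mul_left 2).add hc))
    refine this.congr fun k => ?_
    push_cast
    ring
  refine (h2.mul_right ε).congr fun k => ?_
  rw [pow_succ]
  ring

lemma ae_summable_of_integral_le {Ω : Type} [MeasurableSpace Ω] {μ : Measure Ω}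
    {F : ℕ → Ω → ℝ} (hmeas : ∀ k, Measurable (F k)) (hnn : ∀ k ω, 0 ≤ F k ω)
    (hint : ∀ k, Integrable (F k) μ) {B : ℕ → ℝ} (hBnn : ∀ k, 0 ≤ B k)
    (hle : ∀ k, (∫ ω, F k ω ∂μ) ≤ B k) (hBs : Summable B) :
    ∀ᵐ ω ∂μ, Summable (fun k => F k ω) := by
  have hfin : (∫⁻ ω, ∑' k, ENNReal.ofReal (F k ω) ∂μ) ≠ ⊤ := by
    rw [lintegral_tsum (fun k => ((hmeas k).ennreal_ofReal).aemeasurable)]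
    have h1 : ∀ k, (∫⁻ ω, ENNReal.ofReal (F k ω) ∂μ) = ENNReal.ofReal (∫ ω, F k ω ∂μ) :=
      fun k => (ofReal_integral_eq_lintegral_ofReal (hint k)
        (ae_of_all _ fun ω => hnn k ω)).symm
    have h2 : (∑' k, ∫⁻ ω, ENNReal.ofReal (F k ω) ∂μ) ≤ ∑' k, ENNReal.ofReal (B k) := by
      refine ENNReal.tsum_le_tsum fun k => ?_
      rw [h1 k]
      exact ENNReal.ofReal_le_ofReal (hle k)
    have h3 : (∑' k, ENNReal.ofReal (B k)) ≠ ⊤ := by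
      rw [← ENNReal.ofReal_tsum_of_nonneg hBnn hBs]
      exact ENNReal.ofReal_ne_top
    exact ne_top_of_le_ne_top h3 h2
  have hae := ae_lt_top (Measurable.ennreal_tsum fun k => (hmeas k).ennreal_ofReal) hfin
  filter_upwards [hae] with ω hω
  have hsum := ENNReal.summable_toReal hω.ne
  refine hsum.congr fun k => ?_
  rw [ENNReal.toReal_ofReal (hnn k ω)]

variable {Ω : Type} [MeasurableSpace Ω] {μ : Measure Ω} [IsProbabilityMeasure μ]
  {Z : ℤ → Ω → ℝ}

lemma W_props (hZm : ∀ t, Measurable (Z t))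
    (hZpos : ∀ t ω, 0 ≤ Z t ω) (hZint : ∀ t, Integrable (Z t) μ)
    (hZmean : ∀ t, ∫ ω, Z t ω ∂μ = 1)
    (hZindep : iIndepFun Z μ) (t : ℤ) {k : ℕ} (g : Fin k → ℕ+) :
    Integrable (fun ω => ∏ i : Fin k, Z (t - ∑ l ∈ Finset.Iic i, (g l : ℕ)) ω) μ ∧
    (∫ ω, ∏ i : Fin k, Z (t - ∑ l ∈ Finset.Iic i, (g l : ℕ)) ω ∂μ) = 1 :=
  integral_prod_Z hZm hZpos hZint hZmean hZindep
    (fun i => t - (∑ l ∈ Finset.Iic i, (g l : ℕ) : ℕ)) (tau_injective t g) Finset.univ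

lemma volterraTerm_props (hZm : ∀ t, Measurable (Z t))
    (hZpos : ∀ t ω, 0 ≤ Z t ω) (hZint : ∀ t, Integrable (Z t) μ)
    (hZmean : ∀ t, ∫ ω, Z t ω ∂μ = 1)
    (hZindep : iIndepFun Z μ) (p : ℕ) (b : ℕ → ℝ) (hbz : ∀ j, p < j → b j = 0) (t : ℤ) (k : ℕ) :
    Integrable (volterraTerm b Z t k) μ ∧
    (∫ ω, volterraTerm b Z t k ω ∂μ) = b 0 * (∑ x ∈ Pfin p, b (x:ℕ))^k := by
  have heq : volterraTerm b Z t k = fun ω =>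
      ∑ g ∈ Fintype.piFinset (fun _ : Fin k => Pfin p),
        (b 0 * ∏ i : Fin k, b (g i)) *
          ∏ i : Fin k, Z (t - ∑ l ∈ Finset.Iic i, (g l : ℕ)) ω :=
    funext (volterraTerm_eq_sum p b hbz Z t k)
  rw [heq]
  constructor
  · exact integrable_finset_sum _ fun g _ =>
      (W_props hZm hZpos hZint hZmean hZindep t g).1.const_mul _
  · rw [integral_finset_sum _ fun g _ =>
      (W_props hZm hZpos hZint hZmean hZindep t g).1.const_mul _]
    have : ∀ g ∈ Fintype.piFinset (fun _ : Fin k => Pfin p),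
        (∫ ω, (b 0 * ∏ i : Fin k, b ((g i):ℕ)) *
          ∏ i : Fin k, Z (t - ∑ l ∈ Finset.Iic i, (g l : ℕ)) ω ∂μ)
        = b 0 * ∏ i : Fin k, b ((g i):ℕ) := by
      intro g _
      rw [MeasureTheory.integral_const_mul, (W_props hZm hZpos hZint hZmean hZindep t g).2, mul_one]
    rw [Finset.sum_congr rfl this, ← Finset.mul_sum,
      ← Finset.prod_univ_sum (fun _ : Fin k => Pfin p) (fun _ x => b (x:ℕ)),
      Finset.prod_const, Finset.card_univ, Fintype.card_fin]

lemma volterraTerm_measurable (hZm : ∀ t, Measurable (Z t)) (b : ℕ → ℝ) (p : ℕ) (hbz : ∀ j, p < j → b j = 0) (t : ℤ) (k : ℕ) :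
    Measurable (volterraTerm b Z t k) := by
  have heq : volterraTerm b Z t k = fun ω =>
      ∑ g ∈ Fintype.piFinset (fun _ : Fin k => Pfin p),
        (b 0 * ∏ i : Fin k, b (g i)) *
          ∏ i : Fin k, Z (t - ∑ l ∈ Finset.Iic i, (g l : ℕ)) ω :=
    funext (volterraTerm_eq_sum p b hbz Z t k)
  rw [heq]
  exact Finset.measurable_sum _ fun g _ =>
    (Finset.measurable_prod _ fun i _ => hZm _).const_mul _

lemma Dk_props (hZm : ∀ t, Measurable (Z t))
    (hZpos : ∀ t ω, 0 ≤ Z t ω) (hZint : ∀ t, Integrable (Z t) μ)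
    (hZmean : ∀ t, ∫ ω, Z t ω ∂μ = 1)
    (hZindep : iIndepFun Z μ) (a abar : ℕ → ℝ) (p : ℕ) (t : ℤ) (k : ℕ) :
    Integrable (fun ω => ∑ g ∈ Fintype.piFinset (fun _ : Fin k => Pfin p),
        |a 0 * ∏ i : Fin k, a ((g i):ℕ) - abar 0 * ∏ i : Fin k, abar ((g i):ℕ)| *
          ∏ i : Fin k, Z (t - ∑ l ∈ Finset.Iic i, (g l : ℕ)) ω) μ ∧
    (∫ ω, ∑ g ∈ Fintype.piFinset (fun _ : Fin k => Pfin p),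
        |a 0 * ∏ i : Fin k, a ((g i):ℕ) - abar 0 * ∏ i : Fin k, abar ((g i):ℕ)| *
          ∏ i : Fin k, Z (t - ∑ l ∈ Finset.Iic i, (g l : ℕ)) ω ∂μ)
      = ∑ g ∈ Fintype.piFinset (fun _ : Fin k => Pfin p),
          |a 0 * ∏ i : Fin k, a ((g i):ℕ) - abar 0 * ∏ i : Fin k, abar ((g i):ℕ)| := by
  constructor
  · exact integrable_finset_sum _ fun g _ =>
      (W_props hZm hZpos hZint hZmean hZindep t g).1.const_mul _
  · rw [integral_finset_sum _ fun g _ =>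
      (W_props hZm hZpos hZint hZmean hZindep t g).1.const_mul _]
    refine Finset.sum_congr rfl fun g _ => ?_
    rw [MeasureTheory.integral_const_mul, (W_props hZm hZpos hZint hZmean hZindep t g).2, mul_one]


/-- Parameter-stability of the stationary ARCH(p) solution: for two
admissible coefficient vectors `a, ā` (with intercepts bounded by `M`) and the
same i.i.d. innovations, `E|X_t² − X̄_t²| ≤ C |ā − a| Σ_{k≥1} k² (1−δ)^k`,
where `C` depends only on `p`, `δ` and `M`. -/
theorem stmt_12 (δ : ℝ) (hδ : δ ∈ Set.Ioo (0:ℝ) 1) (p : ℕ) (hp : 1 ≤ p)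
    (M : ℝ) (hM : 0 < M) :
    ∃ C > (0:ℝ), ∀ (Ω : Type) (m0 : MeasurableSpace Ω) (μ : Measure Ω),
      IsProbabilityMeasure μ →
      ∀ (Z : ℤ → Ω → ℝ), (∀ t, Measurable (Z t)) →
        (∀ t ω, 0 ≤ Z t ω) → (∀ t, Integrable (Z t) μ) →
        (∀ t, ∫ ω, Z t ω ∂μ = 1) →
        iIndepFun Z μ →
        (∀ t, IdentDistrib (Z t) (Z 0) μ μ) →
      ∀ (a abar : ℕ → ℝ),
        (0 < a 0) → (∀ j, 1 ≤ j → 0 ≤ a j) → (∀ j, p < j → a j = 0) →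
        (∑ j ∈ Icc 1 p, a j) ≤ 1 - δ → a 0 ≤ M →
        (0 < abar 0) → (∀ j, 1 ≤ j → 0 ≤ abar j) → (∀ j, p < j → abar j = 0) →
        (∑ j ∈ Icc 1 p, abar j) ≤ 1 - δ → abar 0 ≤ M →
      ∀ t : ℤ,
        ∫ ω, |volterra a Z t ω - volterra abar Z t ω| ∂μ
          ≤ C * Real.sqrt (∑ j ∈ range (p + 1), (abar j - a j) ^ 2)
              * ∑' k : ℕ, ((k : ℝ) + 1) ^ 2 * (1 - δ) ^ (k + 1) := by
  obtain ⟨hδ0, hδ1⟩ := hδ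
  have hε0 : (0:ℝ) < 1 - δ := by linarith
  have hε1 : 1 - δ < 1 := by linarith
  refine ⟨(1 + M*(p:ℝ))/(1-δ)^2, by positivity, ?_⟩
  intro Ω m0 μ hμ Z hZm hZpos hZint hZmean hZindep hZid
    a abar ha0 hapos hazero hasum haM hb0 hbpos hbzero hbsum hbM t
  set C : ℝ := (1 + M*(p:ℝ))/(1-δ)^2 with hCdef
  set d : ℝ := Real.sqrt (∑ j ∈ range (p + 1), (abar j - a j) ^ 2) with hddef
  set S0 : ℝ := ∑' k : ℕ, ((k : ℝ) + 1) ^ 2 * (1 - δ) ^ (k + 1) with hS0def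
  have hd0 : 0 ≤ d := Real.sqrt_nonneg _
  have hdle : ∀ j, j ≤ p → |a j - abar j| ≤ d := by
    intro j hj
    rw [abs_sub_comm, hddef]
    have h1 : (abar j - a j)^2 ≤ ∑ j ∈ range (p + 1), (abar j - a j) ^ 2 :=
      Finset.single_le_sum (f := fun i => (abar i - a i)^2) (fun i _ => sq_nonneg _)
        (Finset.mem_range.mpr (by omega : j < p + 1))
    calc |abar j - a j| = Real.sqrt ((abar j - a j)^2) := (Real.sqrt_sq_eq_abs _).symm
      _ ≤ _ := Real.sqrt_le_sqrt h1
  have hS0nn : 0 ≤ S0 := tsum_nonneg fun k => by positivity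
  have hCd0 : 0 ≤ C * d := mul_nonneg (by positivity) hd0
  have ha' : ∀ x : ℕ+, 0 ≤ a (x:ℕ) := fun x => hapos _ x.2
  have hb' : ∀ x : ℕ+, 0 ≤ abar (x:ℕ) := fun x => hbpos _ x.2
  have hsa : ∑ x ∈ Pfin p, a (x:ℕ) ≤ 1 - δ := by rw [sum_Pfin]; exact hasum
  have hsb : ∑ x ∈ Pfin p, abar (x:ℕ) ≤ 1 - δ := by rw [sum_Pfin]; exact hbsum
  have hsa0 : 0 ≤ ∑ x ∈ Pfin p, a (x:ℕ) := Finset.sum_nonneg fun x _ => ha' x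
  have hsb0 : 0 ≤ ∑ x ∈ Pfin p, abar (x:ℕ) := Finset.sum_nonneg fun x _ => hb' x
  -- the k-th difference coefficient sum
  set Δ : ℕ → ℝ := fun k => ∑ g ∈ Fintype.piFinset (fun _ : Fin k => Pfin p),
      |a 0 * ∏ i : Fin k, a ((g i):ℕ) - abar 0 * ∏ i : Fin k, abar ((g i):ℕ)| with hΔdef
  set B : ℕ → ℝ := fun k => (C * d) * (((k:ℝ)+1)^2 * (1-δ)^(k+1)) with hBdef
  have hBnn : ∀ k, 0 ≤ B k := fun k => mul_nonneg hCd0 (by positivity)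
  have hBsum : Summable B := (summable_ksq_geom (1-δ) hε0.le hε1).mul_left (C * d)
  have hΔle : ∀ k, Δ k ≤ B k := by
    intro k
    have h1 := delta_bound_aux p (1-δ) d hε0.le hd0 a abar ha' hb' hsa hsb
      (fun x hx => hdle _ (mem_Pfin.mp hx)) (hdle 0 (Nat.zero_le p)) hb0.le k
    have h2 : Δ k ≤ d * (1-δ)^k + M * ((k:ℝ) * ((p:ℝ) * d * (1-δ)^(k-1))) := by
      refine h1.trans ?_
      have : (0:ℝ) ≤ (k:ℝ) * ((p:ℝ) * d * (1-δ)^(k-1)) := by positivity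
      nlinarith [hbM, this]
    have h3 := delta_final δ M d hδ0 hδ1 hM hd0 p k (Δ k) h2
    calc Δ k ≤ ((1 + M*(p:ℝ))/(1-δ)^2) * d * ((k:ℝ)+1)^2 * (1-δ)^(k+1) := h3
      _ = B k := by rw [hBdef, hCdef]; ring
  -- D k: the dominating integrable functions
  set D : ℕ → Ω → ℝ := fun k ω => ∑ g ∈ Fintype.piFinset (fun _ : Fin k => Pfin p),
      |a 0 * ∏ i : Fin k, a ((g i):ℕ) - abar 0 * ∏ i : Fin k, abar ((g i):ℕ)| *
        ∏ i : Fin k, Z (t - ∑ l ∈ Finset.Iic i, (g l : ℕ)) ω with hDdef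
  have hDnn : ∀ k ω, 0 ≤ D k ω := fun k ω => Finset.sum_nonneg fun g _ =>
    mul_nonneg (abs_nonneg _) (Finset.prod_nonneg fun i _ => hZpos _ ω)
  have hDmeas : ∀ k, Measurable (D k) := fun k => Finset.measurable_sum _ fun g _ =>
    (Finset.measurable_prod _ fun i _ => hZm _).const_mul _
  have hDint : ∀ k, Integrable (D k) μ :=
    fun k => (Dk_props hZm hZpos hZint hZmean hZindep a abar p t k).1
  have hDval : ∀ k, (∫ ω, D k ω ∂μ) = Δ k :=
    fun k => (Dk_props hZm hZpos hZint hZmean hZindep a abar p t k).2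
  have hDsum : ∀ᵐ ω ∂μ, Summable (fun k => D k ω) :=
    ae_summable_of_integral_le hDmeas hDnn hDint hBnn
      (fun k => le_of_le_of_eq (le_of_eq (hDval k)) rfl |>.trans (hΔle k)) hBsum
  -- summability of the two Volterra series
  have hTa_nn : ∀ k ω, 0 ≤ volterraTerm a Z t k ω := by
    intro k ω
    rw [volterraTerm_eq_sum p a hazero]
    exact Finset.sum_nonneg fun g _ => mul_nonneg
      (mul_nonneg ha0.le (Finset.prod_nonneg fun i _ => ha' _))
      (Finset.prod_nonneg fun i _ => hZpos _ ω)
  have hTb_nn : ∀ k ω, 0 ≤ volterraTerm abar Z t k ω := by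
    intro k ω
    rw [volterraTerm_eq_sum p abar hbzero]
    exact Finset.sum_nonneg fun g _ => mul_nonneg
      (mul_nonneg hb0.le (Finset.prod_nonneg fun i _ => hb' _))
      (Finset.prod_nonneg fun i _ => hZpos _ ω)
  have hgeo : Summable (fun k : ℕ => M * (1-δ)^k) :=
    (summable_geometric_of_lt_one hε0.le hε1).mul_left M
  have hTa_sum : ∀ᵐ ω ∂μ, Summable (fun k => volterraTerm a Z t k ω) := by
    refine ae_summable_of_integral_le
      (fun k => volterraTerm_measurable hZm a p hazero t k)
      hTa_nn (fun k => (volterraTerm_props hZm hZpos hZint hZmean hZindep p a hazero t k).1)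
      (fun k => by positivity) (fun k => ?_) hgeo
    rw [(volterraTerm_props hZm hZpos hZint hZmean hZindep p a hazero t k).2]
    have := pow_le_pow_left₀ hsa0 hsa k
    nlinarith [pow_nonneg hsa0 k, pow_nonneg hε0.le k]
  have hTb_sum : ∀ᵐ ω ∂μ, Summable (fun k => volterraTerm abar Z t k ω) := by
    refine ae_summable_of_integral_le
      (fun k => volterraTerm_measurable hZm abar p hbzero t k)
      hTb_nn (fun k => (volterraTerm_props hZm hZpos hZint hZmean hZindep p abar hbzero t k).1)
      (fun k => by positivity) (fun k => ?_) hgeo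
    rw [(volterraTerm_props hZm hZpos hZint hZmean hZindep p abar hbzero t k).2]
    have := pow_le_pow_left₀ hsb0 hsb k
    nlinarith [pow_nonneg hsb0 k, pow_nonneg hε0.le k]
  -- pointwise termwise bound
  have hterm : ∀ k ω, |volterraTerm a Z t k ω - volterraTerm abar Z t k ω| ≤ D k ω := by
    intro k ω
    rw [volterraTerm_eq_sum p a hazero, volterraTerm_eq_sum p abar hbzero,
      ← Finset.sum_sub_distrib]
    refine (Finset.abs_sum_le_sum_abs _ _).trans (le_of_eq (Finset.sum_congr rfl fun g _ => ?_))
    rw [← sub_mul, abs_mul,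
      abs_of_nonneg (Finset.prod_nonneg fun i _ => hZpos _ ω)]
  -- a.e. pointwise bound
  have hae : ∀ᵐ ω ∂μ, |volterra a Z t ω - volterra abar Z t ω| ≤ ∑' k, D k ω := by
    filter_upwards [hDsum, hTa_sum, hTb_sum] with ω hDs hTas hTbs
    have hsub : volterra a Z t ω - volterra abar Z t ω
        = ∑' k, (volterraTerm a Z t k ω - volterraTerm abar Z t k ω) := by
      rw [volterra, volterra, ← Summable.tsum_sub hTas hTbs]
    have habs_sum : Summable (fun k =>
        |volterraTerm a Z t k ω - volterraTerm abar Z t k ω|) :=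
      Summable.of_nonneg_of_le (fun k => abs_nonneg _) (fun k => hterm k ω) hDs
    rw [hsub]
    calc |∑' k, (volterraTerm a Z t k ω - volterraTerm abar Z t k ω)|
        ≤ ∑' k, |volterraTerm a Z t k ω - volterraTerm abar Z t k ω| := by
          have := norm_tsum_le_tsum_norm (f := fun k =>
            volterraTerm a Z t k ω - volterraTerm abar Z t k ω) (by simpa [Real.norm_eq_abs] using habs_sum)
          simpa [Real.norm_eq_abs] using this
      _ ≤ ∑' k, D k ω := Summable.tsum_le_tsum (fun k => hterm k ω) habs_sum hDs
  -- final integral estimate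
  by_cases hI : Integrable (fun ω => |volterra a Z t ω - volterra abar Z t ω|) μ
  · rw [integral_eq_lintegral_of_nonneg_ae (ae_of_all _ fun ω => abs_nonneg _)
      hI.aestronglyMeasurable]
    have hRHS0 : 0 ≤ C * d * S0 := mul_nonneg hCd0 hS0nn
    refine ENNReal.toReal_le_of_le_ofReal hRHS0 ?_
    calc (∫⁻ ω, ENNReal.ofReal |volterra a Z t ω - volterra abar Z t ω| ∂μ)
        ≤ ∫⁻ ω, ∑' k, ENNReal.ofReal (D k ω) ∂μ := by
          refine lintegral_mono_ae ?_
          filter_upwards [hae, hDsum] with ω h1 h2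
          calc ENNReal.ofReal |volterra a Z t ω - volterra abar Z t ω|
              ≤ ENNReal.ofReal (∑' k, D k ω) := ENNReal.ofReal_le_ofReal h1
            _ = ∑' k, ENNReal.ofReal (D k ω) :=
              ENNReal.ofReal_tsum_of_nonneg (fun k => hDnn k ω) h2
      _ = ∑' k, ∫⁻ ω, ENNReal.ofReal (D k ω) ∂μ :=
          lintegral_tsum fun k => ((hDmeas k).ennreal_ofReal).aemeasurable
      _ = ∑' k, ENNReal.ofReal (Δ k) := by
          refine tsum_congr fun k => ?_
          rw [← ofReal_integral_eq_lintegral_ofReal (hDint k)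
            (ae_of_all _ fun ω => hDnn k ω), hDval k]
      _ ≤ ∑' k, ENNReal.ofReal (B k) :=
          ENNReal.tsum_le_tsum fun k => ENNReal.ofReal_le_ofReal (hΔle k)
      _ = ENNReal.ofReal (∑' k, B k) :=
          (ENNReal.ofReal_tsum_of_nonneg hBnn hBsum).symm
      _ = ENNReal.ofReal (C * d * S0) := by
          rw [hBdef, tsum_mul_left, hS0def, mul_assoc]
  · rw [integral_undef hI]
    exact mul_nonneg hCd0 hS0nn
end

section
/- Let δ ∈ (0,1) and suppose {X̃_t(u)}_t and {X̃_t(v)}_t are stationary ARCH(p) processes driven by the same i.i.d. innovations {Z_t} (nonnegative, mean 1) with coefficient vectors a(u), a(v) satisfying a_0(·) ∈ [ρ₁, ρ₂] ⊂ (0,∞), Σ_{j=1}^p a_j(·) ≤ 1−δ, and the Hölder condition |a_j(u) − a_j(v)| ≤ K|u−v|^β for all j and some β ∈ (0,1], K > 0. Then E|X̃_t²(u) − X̃_t²(v)| ≤ C|u−v|^β, where C depends only on p, δ, ρ₂, K, β. -/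
open MeasureTheory Finset ProbabilityTheory
open scoped ENNReal

lemma sum_piFinset_succ {M : Type*} [AddCommMonoid M] {k : ℕ} (pF : Finset ℕ+)
    (f : (Fin (k+1) → ℕ+) → M) :
    ∑ g ∈ Fintype.piFinset (fun _ : Fin (k+1) => pF), f g
      = ∑ j ∈ pF, ∑ g ∈ Fintype.piFinset (fun _ : Fin k => pF), f (Fin.cons j g) := by
  rw [← Finset.sum_product']
  refine Finset.sum_nbij' (fun g => (g 0, Fin.tail g)) (fun q => Fin.cons q.1 q.2) ?_ ?_ ?_ ?_ ?_
  · intro g hg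
    simp only [Fintype.mem_piFinset] at hg
    simp only [Finset.mem_product, Fintype.mem_piFinset]
    exact ⟨hg 0, fun i => hg _⟩
  · intro q hq
    simp only [Finset.mem_product, Fintype.mem_piFinset] at hq
    simp only [Fintype.mem_piFinset]
    intro i
    refine Fin.cases ?_ ?_ i
    · simpa using hq.1
    · intro j; simpa using hq.2 j
  · intro g _; exact Fin.cons_self_tail g
  · intro q _; simp [Fin.tail_cons]
  · intro g _; rw [Fin.cons_self_tail]
lemma arch_sum_prod_piFinset (pF : Finset ℕ+) (x : ℕ+ → ℝ) (k : ℕ) :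
    ∑ g ∈ Fintype.piFinset (fun _ : Fin k => pF), ∏ i, x (g i)
      = (∑ j ∈ pF, x j)^k := by
  rw [← Finset.prod_univ_sum]
  simp [Finset.prod_const]

lemma arch_sum_prod_piFinset' (pF : Finset ℕ+) (a : ℕ → ℝ) (k : ℕ) :
    ∑ g ∈ Fintype.piFinset (fun _ : Fin k => pF), ∏ i, a ((g i : ℕ))
      = (∑ j ∈ pF, a (j:ℕ))^k :=
  arch_sum_prod_piFinset pF (fun j => a (j:ℕ)) k

lemma key_sum (pF : Finset ℕ+) (x y : ℕ+ → ℝ) (hx : ∀ j, 0 ≤ x j) (hy : ∀ j, 0 ≤ y j)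
    (M E : ℝ) (hM : 0 ≤ M) (hxM : ∑ j ∈ pF, x j ≤ M) (hyM : ∑ j ∈ pF, y j ≤ M)
    (hE : ∑ j ∈ pF, |x j - y j| ≤ E) (k : ℕ) :
    ∑ g ∈ Fintype.piFinset (fun _ : Fin k => pF), |(∏ i, x (g i)) - ∏ i, y (g i)|
      ≤ k * E * M^(k-1) := by
  have hE0 : 0 ≤ E := le_trans (Finset.sum_nonneg fun j _ => abs_nonneg _) hE
  have hx0 : 0 ≤ ∑ j ∈ pF, x j := Finset.sum_nonneg fun j _ => hx j
  induction k with
  | zero => simp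
  | succ k ih =>
    have hT0 : 0 ≤ ∑ g ∈ Fintype.piFinset (fun _ : Fin k => pF),
        |(∏ i, x (g i)) - ∏ i, y (g i)| := Finset.sum_nonneg fun g _ => abs_nonneg _
    rw [sum_piFinset_succ]
    have step : ∀ j ∈ pF, ∑ g ∈ Fintype.piFinset (fun _ : Fin k => pF),
        |(∏ i : Fin (k+1), x ((Fin.cons j g : Fin (k+1) → ℕ+) i)) - ∏ i : Fin (k+1), y ((Fin.cons j g : Fin (k+1) → ℕ+) i)|
        ≤ |x j - y j| * (∑ l ∈ pF, x l)^k
          + y j * ∑ g ∈ Fintype.piFinset (fun _ : Fin k => pF),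
              |(∏ i, x (g i)) - ∏ i, y (g i)| := by
      intro j _
      have pt : ∀ g : Fin k → ℕ+,
          |(∏ i : Fin (k+1), x ((Fin.cons j g : Fin (k+1) → ℕ+) i)) - ∏ i : Fin (k+1), y ((Fin.cons j g : Fin (k+1) → ℕ+) i)|
          ≤ |x j - y j| * (∏ i, x (g i)) + y j * |(∏ i, x (g i)) - ∏ i, y (g i)| := by
        intro g
        have hPx : (0:ℝ) ≤ ∏ i, x (g i) := Finset.prod_nonneg fun i _ => hx _
        rw [Fin.prod_univ_succ, Fin.prod_univ_succ]
        simp only [Fin.cons_zero, Fin.cons_succ]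
        have hid : x j * ∏ i, x (g i) - y j * ∏ i, y (g i)
            = (x j - y j) * (∏ i, x (g i)) + y j * ((∏ i, x (g i)) - ∏ i, y (g i)) := by ring
        rw [hid]
        refine le_trans (abs_add_le _ _) ?_
        rw [abs_mul, abs_mul, abs_of_nonneg hPx, abs_of_nonneg (hy j)]
      refine le_trans (Finset.sum_le_sum fun g _ => pt g) ?_
      rw [Finset.sum_add_distrib, ← Finset.mul_sum, ← Finset.mul_sum, arch_sum_prod_piFinset]
    refine le_trans (Finset.sum_le_sum step) ?_
    rw [Finset.sum_add_distrib, ← Finset.sum_mul, ← Finset.sum_mul]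
    have h1 : (∑ j ∈ pF, |x j - y j|) * (∑ l ∈ pF, x l)^k ≤ E * M^k :=
      mul_le_mul hE (pow_le_pow_left₀ hx0 hxM k) (pow_nonneg hx0 k) hE0
    have h2 : (∑ j ∈ pF, y j) * (∑ g ∈ Fintype.piFinset (fun _ : Fin k => pF),
        |(∏ i, x (g i)) - ∏ i, y (g i)|) ≤ M * (k * E * M^(k-1)) :=
      mul_le_mul hyM ih hT0 hM
    have h3 : M * (k * E * M^(k-1)) ≤ k * E * M^k := by
      cases k with
      | zero => simp
      | succ m =>
        have : M * ((m+1 : ℕ) * E * M^(m+1-1)) = (m+1 : ℕ) * E * M^(m+1) := by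
          simp only [Nat.add_sub_cancel]
          ring
        rw [this]
    have h4 : ((k+1 : ℕ) : ℝ) * E * M^(k+1-1) = E * M^k + k * E * M^k := by
      simp only [Nat.add_sub_cancel]
      push_cast
      ring
    rw [h4]
    linarith
lemma pnat_icc_image (q : ℕ+) :
    (Finset.Icc (1:ℕ+) q).image (fun j : ℕ+ => (j:ℕ)) = Finset.Icc 1 (q:ℕ) := by
  ext n
  simp only [Finset.mem_image, Finset.mem_Icc]
  constructor
  · rintro ⟨j, ⟨h1, h2⟩, rfl⟩
    exact ⟨j.one_le, by exact_mod_cast h2⟩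
  · rintro ⟨h1, h2⟩
    exact ⟨⟨n, by omega⟩, ⟨by exact_mod_cast h1, by exact_mod_cast h2⟩, rfl⟩

lemma sum_pnat_icc (q : ℕ+) (f : ℕ → ℝ) :
    ∑ j ∈ Finset.Icc (1:ℕ+) q, f (j:ℕ) = ∑ n ∈ Finset.Icc 1 (q:ℕ), f n := by
  rw [← pnat_icc_image q, Finset.sum_image]
  intro a _ b _ h
  exact PNat.coe_injective h
lemma tau_inj (t : ℤ) {k : ℕ} (g : Fin k → ℕ+) :
    Function.Injective (fun i : Fin k => t - ((∑ l ∈ Finset.Iic i, (g l : ℕ) : ℕ) : ℤ)) := by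
  have hmono : StrictMono (fun i : Fin k => ∑ l ∈ Finset.Iic i, (g l : ℕ)) := by
    intro i j hij
    refine Finset.sum_lt_sum_of_subset (Finset.Iic_subset_Iic.mpr hij.le)
      (Finset.mem_Iic.mpr le_rfl) (Finset.notMem_mono (Finset.Iic_subset_Iic.mpr le_rfl) ?_)
      (g j).pos (fun l _ _ => Nat.zero_le _)
    simpa using not_le.mpr hij
  intro i j h
  simp only [sub_right_injective.eq_iff, Int.ofNat_inj] at h
  exact hmono.injective (by exact_mod_cast h)
lemma lint_W {Ω : Type} [m0 : MeasurableSpace Ω] (μ : Measure Ω) [IsProbabilityMeasure μ]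
    (Z : ℤ → Ω → ℝ) (hZmeas : ∀ t, Measurable (Z t)) (hZpos : ∀ t ω, 0 ≤ Z t ω)
    (hZint : ∀ t, Integrable (Z t) μ) (hZmean : ∀ t, ∫ ω, Z t ω ∂μ = 1)
    (hZindep : iIndepFun Z μ)
    {k : ℕ} (τ : Fin k → ℤ) (hτ : Function.Injective τ) :
    ∫⁻ ω, ENNReal.ofReal (∏ i, Z (τ i) ω) ∂μ = 1 := by
  set F : ℤ → Ω → ℝ≥0∞ := fun j ω => ENNReal.ofReal (Z j ω) with hF
  have hFmeas : ∀ j, Measurable (F j) := fun j => ENNReal.measurable_ofReal.comp (hZmeas j)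
  have hFindep : iIndepFun F μ :=
    hZindep.comp (fun _ => ENNReal.ofReal) (fun _ => ENNReal.measurable_ofReal)
  have hFone : ∀ j, ∫⁻ ω, F j ω ∂μ = 1 := by
    intro j
    rw [← ofReal_integral_eq_lintegral_ofReal (hZint j) (Filter.Eventually.of_forall (hZpos j)),
      hZmean j, ENNReal.ofReal_one]
  have hs : ∀ s : Finset ℤ, ∫⁻ ω, ∏ j ∈ s, F j ω ∂μ = ∏ j ∈ s, ∫⁻ ω, F j ω ∂μ := by
    intro s
    induction s using Finset.induction_on with
    | empty => simp
    | @insert a s ha ih =>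
      have hindep : IndepFun (F a) (fun ω => ∏ j ∈ s, F j ω) μ := by
        have := (hFindep.indepFun_finsetProd_of_notMem hFmeas ha).symm
        have heq : (∏ j ∈ s, F j) = fun ω => ∏ j ∈ s, F j ω := by
          funext ω; simp [Finset.prod_apply]
        rwa [heq] at this
      simp_rw [Finset.prod_insert ha]
      rw [← ih]
      have := lintegral_mul_eq_lintegral_mul_lintegral_of_indepFun (μ := μ)
        (hFmeas a) (Finset.measurable_prod s (fun j _ => hFmeas j)) hindep
      simpa using this
  have hprod : ∀ ω, ENNReal.ofReal (∏ i, Z (τ i) ω) = ∏ j ∈ Finset.univ.image τ, F j ω := by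
    intro ω
    rw [ENNReal.ofReal_prod_of_nonneg (fun i _ => hZpos _ ω)]
    rw [Finset.prod_image (fun a _ b _ h => hτ h)]
  simp_rw [hprod]
  rw [hs]
  exact Finset.prod_eq_one fun j _ => hFone j
/-- `L¹`-Hölder continuity of the stationary approximation family of a
tvARCH(p) process: under Hölder continuity of the coefficients,
`E|X̃_t²(u) − X̃_t²(v)| ≤ C |u−v|^β` with `C` depending only on
`p, δ, ρ₂, K, β`. -/
theorem stmt_17 (δ : ℝ) (hδ : δ ∈ Set.Ioo (0:ℝ) 1) (p : ℕ) (hp : 1 ≤ p)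
    (ρ₂ K β : ℝ) (hρ₂ : 0 < ρ₂) (hK : 0 < K) (hβ : β ∈ Set.Ioc (0:ℝ) 1) :
    ∃ C > (0:ℝ), ∀ (Ω : Type) (m0 : MeasurableSpace Ω) (μ : Measure Ω),
      IsProbabilityMeasure μ →
      ∀ (Z : ℤ → Ω → ℝ), (∀ t, Measurable (Z t)) →
        (∀ t ω, 0 ≤ Z t ω) → (∀ t, Integrable (Z t) μ) →
        (∀ t, ∫ ω, Z t ω ∂μ = 1) →
        iIndepFun Z μ →
        (∀ t, IdentDistrib (Z t) (Z 0) μ μ) →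
      ∀ (ρ₁ : ℝ) (au av : ℕ → ℝ) (u v : ℝ), 0 < ρ₁ →
        (ρ₁ ≤ au 0 ∧ au 0 ≤ ρ₂) → (ρ₁ ≤ av 0 ∧ av 0 ≤ ρ₂) →
        (∀ j, 1 ≤ j → 0 ≤ au j) → (∀ j, 1 ≤ j → 0 ≤ av j) →
        (∀ j, p < j → au j = 0) → (∀ j, p < j → av j = 0) →
        (∑ j ∈ Icc 1 p, au j) ≤ 1 - δ → (∑ j ∈ Icc 1 p, av j) ≤ 1 - δ →
        (∀ j, j ≤ p → |au j - av j| ≤ K * |u - v| ^ β) →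
      ∀ t : ℤ,
        ∫ ω, |volterra au Z t ω - volterra av Z t ω| ∂μ ≤ C * |u - v| ^ β := by
  obtain ⟨hδ0, hδ1⟩ := hδ
  have hM0 : (0:ℝ) ≤ 1 - δ := by linarith
  have hM1 : (1:ℝ) - δ < 1 := by linarith
  have hgeo : Summable (fun k : ℕ => (1-δ)^k) := summable_geometric_of_lt_one hM0 hM1
  have hlin : Summable (fun k : ℕ => (k:ℝ) * (1-δ)^(k-1)) := by
    rw [← summable_nat_add_iff 1]
    have h1 : Summable (fun n : ℕ => (n:ℝ)^1 * (1-δ)^n) :=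
      summable_pow_mul_geometric_of_norm_lt_one 1
        (by rw [Real.norm_eq_abs, abs_of_nonneg hM0]; exact hM1)
    refine (h1.add hgeo).congr fun n => ?_
    push_cast [Nat.add_sub_cancel]
    ring
  set cseq : ℕ → ℝ := fun k => K * (1-δ)^k + ((p:ℝ)*ρ₂*K) * ((k:ℝ) * (1-δ)^(k-1))
    with hcseq_def
  have hcseq0 : ∀ k, 0 ≤ cseq k := fun k =>
    add_nonneg (mul_nonneg hK.le (pow_nonneg hM0 _))
      (mul_nonneg (by positivity) (mul_nonneg (Nat.cast_nonneg _) (pow_nonneg hM0 _)))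
  have hcsum : Summable cseq := (hgeo.mul_left K).add (hlin.mul_left _)
  have htsum0 : 0 ≤ ∑' k, cseq k := tsum_nonneg hcseq0
  refine ⟨(∑' k, cseq k) + 1, by linarith, ?_⟩
  intro Ω m0 μ hμ Z hZmeas hZpos hZint hZmean hZindep _hZid ρ₁ au av u v hρ₁ hau0 hav0
    haunn havnn hauvan havvan hsumu hsumv hhold t
  have hA0 : 0 ≤ |u - v| ^ β := Real.rpow_nonneg (abs_nonneg _) β
  set pp : ℕ+ := ⟨p, by omega⟩ with hpp
  set pF : Finset ℕ+ := Finset.Icc 1 pp with hpF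
  have hau00 : 0 ≤ au 0 := le_trans hρ₁.le hau0.1
  have hav00 : 0 ≤ av 0 := le_trans hρ₁.le hav0.1
  have haunn' : ∀ j : ℕ+, 0 ≤ au (j:ℕ) := fun j => haunn _ j.one_le
  have havnn' : ∀ j : ℕ+, 0 ≤ av (j:ℕ) := fun j => havnn _ j.one_le
  have hsum_au : ∑ j ∈ pF, au (j:ℕ) ≤ 1 - δ := by
    rw [hpF, sum_pnat_icc]; exact hsumu
  have hsum_av : ∑ j ∈ pF, av (j:ℕ) ≤ 1 - δ := by
    rw [hpF, sum_pnat_icc]; exact hsumv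
  have hsau0 : 0 ≤ ∑ j ∈ pF, au (j:ℕ) := Finset.sum_nonneg fun j _ => haunn' j
  have hcard : pF.card = p := by
    rw [hpF, PNat.card_Icc]
    simp [hpp]
  have hE : ∑ j ∈ pF, |au (j:ℕ) - av (j:ℕ)| ≤ (p:ℝ) * (K * |u - v| ^ β) := by
    calc ∑ j ∈ pF, |au (j:ℕ) - av (j:ℕ)| ≤ ∑ _j ∈ pF, K * |u - v| ^ β := by
          refine Finset.sum_le_sum fun j hj => hhold _ ?_
          rw [hpF, Finset.mem_Icc] at hj
          exact_mod_cast hj.2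
      _ = pF.card * (K * |u - v| ^ β) := by rw [Finset.sum_const, nsmul_eq_mul]
      _ = (p:ℝ) * (K * |u - v| ^ β) := by rw [hcard]
  -- finite-sum form of volterraTerm
  have hterm : ∀ (a : ℕ → ℝ), (∀ j, p < j → a j = 0) → ∀ (k : ℕ) (ω : Ω),
      volterraTerm a Z t k ω = ∑ g ∈ Fintype.piFinset (fun _ : Fin k => pF),
        (a 0 * ∏ i, a ((g i : ℕ))) * ∏ i, Z (t - ∑ l ∈ Finset.Iic i, (g l : ℕ)) ω := by
    intro a hvan k ω
    simp only [volterraTerm]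
    refine tsum_eq_sum ?_
    intro g hg
    simp only [Fintype.mem_piFinset] at hg
    push_neg at hg
    obtain ⟨i, hi⟩ := hg
    have hlt : p < ((g i : ℕ)) := by
      rw [hpF, Finset.mem_Icc] at hi
      push_neg at hi
      have h2 := hi (g i).one_le
      exact_mod_cast h2
    rw [Finset.prod_eq_zero (Finset.mem_univ i) (hvan _ hlt)]
    simp
  have hWnn : ∀ (k : ℕ) (g : Fin k → ℕ+) (ω : Ω),
      (0:ℝ) ≤ ∏ i, Z (t - ∑ l ∈ Finset.Iic i, (g l : ℕ)) ω :=
    fun k g ω => Finset.prod_nonneg fun i _ => hZpos _ ω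
  have hLint : ∀ (k : ℕ) (b : (Fin k → ℕ+) → ℝ), (∀ g, 0 ≤ b g) →
      ∫⁻ ω, ENNReal.ofReal (∑ g ∈ Fintype.piFinset (fun _ : Fin k => pF),
        b g * ∏ i, Z (t - ∑ l ∈ Finset.Iic i, (g l : ℕ)) ω) ∂μ
      = ENNReal.ofReal (∑ g ∈ Fintype.piFinset (fun _ : Fin k => pF), b g) := by
    intro k b hb
    have hW1 : ∀ g : Fin k → ℕ+,
        ∫⁻ ω, ENNReal.ofReal (∏ i, Z (t - ∑ l ∈ Finset.Iic i, (g l : ℕ)) ω) ∂μ = 1 := by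
      intro g
      simpa using lint_W μ Z hZmeas hZpos hZint hZmean hZindep
        (fun i => t - ((∑ l ∈ Finset.Iic i, (g l : ℕ) : ℕ) : ℤ)) (tau_inj t g)
    have hWmeas : ∀ g : Fin k → ℕ+,
        Measurable (fun ω => ENNReal.ofReal (∏ i, Z (t - ∑ l ∈ Finset.Iic i, (g l : ℕ)) ω)) :=
      fun g => ENNReal.measurable_ofReal.comp (Finset.measurable_prod _ fun i _ => hZmeas _)
    calc ∫⁻ ω, ENNReal.ofReal (∑ g ∈ Fintype.piFinset (fun _ : Fin k => pF),
            b g * ∏ i, Z (t - ∑ l ∈ Finset.Iic i, (g l : ℕ)) ω) ∂μ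
        = ∫⁻ ω, ∑ g ∈ Fintype.piFinset (fun _ : Fin k => pF),
            ENNReal.ofReal (b g) * ENNReal.ofReal (∏ i, Z (t - ∑ l ∈ Finset.Iic i, (g l : ℕ)) ω) ∂μ := by
          congr 1; funext ω
          rw [ENNReal.ofReal_sum_of_nonneg (fun g _ => mul_nonneg (hb g) (hWnn k g ω))]
          exact Finset.sum_congr rfl fun g _ => ENNReal.ofReal_mul (hb g)
      _ = ∑ g ∈ Fintype.piFinset (fun _ : Fin k => pF),
            ∫⁻ ω, ENNReal.ofReal (b g) * ENNReal.ofReal (∏ i, Z (t - ∑ l ∈ Finset.Iic i, (g l : ℕ)) ω) ∂μ :=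
          lintegral_finset_sum _ (fun g _ => (hWmeas g).const_mul _)
      _ = ∑ g ∈ Fintype.piFinset (fun _ : Fin k => pF), ENNReal.ofReal (b g) := by
          refine Finset.sum_congr rfl fun g _ => ?_
          rw [lintegral_const_mul _ (hWmeas g), hW1 g, mul_one]
      _ = ENNReal.ofReal (∑ g ∈ Fintype.piFinset (fun _ : Fin k => pF), b g) :=
          (ENNReal.ofReal_sum_of_nonneg (fun g _ => hb g)).symm
  -- coefficient bounds
  have hcnnu : ∀ (k : ℕ) (g : Fin k → ℕ+), 0 ≤ au 0 * ∏ i, au ((g i : ℕ)) :=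
    fun k g => mul_nonneg hau00 (Finset.prod_nonneg fun i _ => haunn' _)
  have hcnnv : ∀ (k : ℕ) (g : Fin k → ℕ+), 0 ≤ av 0 * ∏ i, av ((g i : ℕ)) :=
    fun k g => mul_nonneg hav00 (Finset.prod_nonneg fun i _ => havnn' _)
  have hDbar : ∀ k : ℕ, ∑ g ∈ Fintype.piFinset (fun _ : Fin k => pF),
      |au 0 * ∏ i, au ((g i : ℕ)) - av 0 * ∏ i, av ((g i : ℕ))| ≤ |u - v| ^ β * cseq k := by
    intro k
    have pt : ∀ g : Fin k → ℕ+,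
        |au 0 * ∏ i, au ((g i : ℕ)) - av 0 * ∏ i, av ((g i : ℕ))|
        ≤ K * |u - v| ^ β * ∏ i, au ((g i : ℕ))
          + av 0 * |(∏ i, au ((g i : ℕ))) - ∏ i, av ((g i : ℕ))| := by
      intro g
      have hPx : (0:ℝ) ≤ ∏ i, au ((g i : ℕ)) := Finset.prod_nonneg fun i _ => haunn' _
      have hid : au 0 * ∏ i, au ((g i : ℕ)) - av 0 * ∏ i, av ((g i : ℕ))
          = (au 0 - av 0) * (∏ i, au ((g i : ℕ)))
            + av 0 * ((∏ i, au ((g i : ℕ))) - ∏ i, av ((g i : ℕ))) := by ring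
      rw [hid]
      refine le_trans (abs_add_le _ _) ?_
      rw [abs_mul, abs_mul, abs_of_nonneg hPx, abs_of_nonneg hav00]
      exact add_le_add_left (mul_le_mul_of_nonneg_right (hhold 0 (Nat.zero_le p)) hPx) _
    refine le_trans (Finset.sum_le_sum fun g _ => pt g) ?_
    rw [Finset.sum_add_distrib, ← Finset.mul_sum, ← Finset.mul_sum,
      arch_sum_prod_piFinset' pF au k]
    have h1 : K * |u - v| ^ β * (∑ j ∈ pF, au (j:ℕ))^k ≤ K * |u - v| ^ β * (1-δ)^k :=
      mul_le_mul_of_nonneg_left (pow_le_pow_left₀ hsau0 hsum_au k) (by positivity)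
    have h2 : av 0 * (∑ g ∈ Fintype.piFinset (fun _ : Fin k => pF),
        |(∏ i, au ((g i : ℕ))) - ∏ i, av ((g i : ℕ))|)
        ≤ ρ₂ * ((k:ℝ) * ((p:ℝ) * (K * |u - v| ^ β)) * (1-δ)^(k-1)) :=
      mul_le_mul hav0.2
        (key_sum pF _ _ haunn' havnn' _ _ hM0 hsum_au hsum_av hE k)
        (Finset.sum_nonneg fun g _ => abs_nonneg _) hρ₂.le
    have h3 : |u - v| ^ β * cseq k
        = K * |u - v| ^ β * (1-δ)^k
          + ρ₂ * ((k:ℝ) * ((p:ℝ) * (K * |u - v| ^ β)) * (1-δ)^(k-1)) := by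
      rw [hcseq_def]; ring
    linarith
  -- a.e. summability of the Volterra terms
  have hae : ∀ (a : ℕ → ℝ), 0 ≤ a 0 → a 0 ≤ ρ₂ → (∀ j : ℕ+, 0 ≤ a (j:ℕ)) →
      (∀ j, p < j → a j = 0) → (∑ j ∈ pF, a (j:ℕ)) ≤ 1 - δ →
      ∀ᵐ ω ∂μ, Summable (fun k => volterraTerm a Z t k ω) := by
    intro a h0 h0' hnn hvan hs
    have hs0 : 0 ≤ ∑ j ∈ pF, a (j:ℕ) := Finset.sum_nonneg fun j _ => hnn j
    have htermnn : ∀ (k : ℕ) (ω : Ω), 0 ≤ volterraTerm a Z t k ω := by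
      intro k ω
      rw [hterm a hvan k ω]
      exact Finset.sum_nonneg fun g _ =>
        mul_nonneg (mul_nonneg h0 (Finset.prod_nonneg fun i _ => hnn _)) (hWnn k g ω)
    have hφeq : ∀ k : ℕ, (fun ω => ENNReal.ofReal (volterraTerm a Z t k ω))
        = fun ω => ENNReal.ofReal (∑ g ∈ Fintype.piFinset (fun _ : Fin k => pF),
            (a 0 * ∏ i, a ((g i : ℕ))) * ∏ i, Z (t - ∑ l ∈ Finset.Iic i, (g l : ℕ)) ω) := by
      intro k; funext ω; rw [hterm a hvan k ω]
    have hφmeas : ∀ k, Measurable (fun ω => ENNReal.ofReal (volterraTerm a Z t k ω)) := by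
      intro k
      rw [hφeq k]
      exact ENNReal.measurable_ofReal.comp (Finset.measurable_sum _ fun g _ =>
        (Finset.measurable_prod _ fun i _ => hZmeas _).const_mul _)
    have hφint : ∀ k, ∫⁻ ω, ENNReal.ofReal (volterraTerm a Z t k ω) ∂μ
        ≤ ENNReal.ofReal (ρ₂ * (1-δ)^k) := by
      intro k
      have heq : ∫⁻ ω, ENNReal.ofReal (volterraTerm a Z t k ω) ∂μ
          = ENNReal.ofReal (∑ g ∈ Fintype.piFinset (fun _ : Fin k => pF),
              a 0 * ∏ i, a ((g i : ℕ))) := by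
        rw [hφeq k]
        exact hLint k _ (fun g => mul_nonneg h0 (Finset.prod_nonneg fun i _ => hnn _))
      rw [heq]
      refine ENNReal.ofReal_le_ofReal ?_
      rw [← Finset.mul_sum, arch_sum_prod_piFinset' pF a k]
      exact mul_le_mul h0' (pow_le_pow_left₀ hs0 hs k) (pow_nonneg hs0 k) hρ₂.le
    have hfin : ∫⁻ ω, ∑' k, ENNReal.ofReal (volterraTerm a Z t k ω) ∂μ < ⊤ := by
      rw [lintegral_tsum fun k => (hφmeas k).aemeasurable]
      calc ∑' k, ∫⁻ ω, ENNReal.ofReal (volterraTerm a Z t k ω) ∂μ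
          ≤ ∑' k, ENNReal.ofReal (ρ₂ * (1-δ)^k) := ENNReal.tsum_le_tsum hφint
        _ = ENNReal.ofReal (∑' k, ρ₂ * (1-δ)^k) :=
            (ENNReal.ofReal_tsum_of_nonneg (fun k => by positivity) (hgeo.mul_left ρ₂)).symm
        _ < ⊤ := ENNReal.ofReal_lt_top
    have hae' : ∀ᵐ ω ∂μ, ∑' k, ENNReal.ofReal (volterraTerm a Z t k ω) < ⊤ :=
      ae_lt_top (Measurable.ennreal_tsum hφmeas) hfin.ne
    filter_upwards [hae'] with ω hω
    exact (ENNReal.summable_toReal hω.ne).congr fun k => ENNReal.toReal_ofReal (htermnn k ω)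
  have hae_u := hae au hau00 hau0.2 haunn' hauvan hsum_au
  have hae_v := hae av hav00 hav0.2 havnn' havvan hsum_av
  -- pointwise bound
  have hptwise : ∀ᵐ ω ∂μ, ENNReal.ofReal |volterra au Z t ω - volterra av Z t ω|
      ≤ ∑' k, ENNReal.ofReal (∑ g ∈ Fintype.piFinset (fun _ : Fin k => pF),
          |au 0 * ∏ i, au ((g i : ℕ)) - av 0 * ∏ i, av ((g i : ℕ))|
            * ∏ i, Z (t - ∑ l ∈ Finset.Iic i, (g l : ℕ)) ω) := by
    filter_upwards [hae_u, hae_v] with ω h1 h2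
    set D : ℕ → ℝ := fun k => ∑ g ∈ Fintype.piFinset (fun _ : Fin k => pF),
        |au 0 * ∏ i, au ((g i : ℕ)) - av 0 * ∏ i, av ((g i : ℕ))|
          * ∏ i, Z (t - ∑ l ∈ Finset.Iic i, (g l : ℕ)) ω with hD_def
    have hDnn : ∀ k, 0 ≤ D k := fun k =>
      Finset.sum_nonneg fun g _ => mul_nonneg (abs_nonneg _) (hWnn k g ω)
    have hDle : ∀ k, |volterraTerm au Z t k ω - volterraTerm av Z t k ω| ≤ D k := by
      intro k
      rw [hterm au hauvan k ω, hterm av havvan k ω, ← Finset.sum_sub_distrib]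
      refine le_trans (Finset.abs_sum_le_sum_abs _ _)
        (le_of_eq (Finset.sum_congr rfl fun g _ => ?_))
      rw [← sub_mul, abs_mul, abs_of_nonneg (hWnn k g ω)]
    have hDub : ∀ k, D k ≤ volterraTerm au Z t k ω + volterraTerm av Z t k ω := by
      intro k
      rw [hterm au hauvan k ω, hterm av havvan k ω, ← Finset.sum_add_distrib]
      refine Finset.sum_le_sum fun g _ => ?_
      rw [← add_mul]
      refine mul_le_mul_of_nonneg_right ?_ (hWnn k g ω)
      refine le_trans (abs_sub _ _) ?_
      rw [abs_of_nonneg (hcnnu k g), abs_of_nonneg (hcnnv k g)]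
    have hDsum : Summable D := Summable.of_nonneg_of_le hDnn hDub (h1.add h2)
    have habs : Summable (fun k => |volterraTerm au Z t k ω - volterraTerm av Z t k ω|) :=
      Summable.of_nonneg_of_le (fun k => abs_nonneg _) hDle hDsum
    have hstep : |volterra au Z t ω - volterra av Z t ω| ≤ ∑' k, D k := by
      simp only [volterra]
      calc |(∑' k, volterraTerm au Z t k ω) - ∑' k, volterraTerm av Z t k ω|
          = |∑' k, (volterraTerm au Z t k ω - volterraTerm av Z t k ω)| := by
            rw [h1.tsum_sub h2]
        _ ≤ ∑' k, |volterraTerm au Z t k ω - volterraTerm av Z t k ω| := by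
            simpa [Real.norm_eq_abs] using
              norm_tsum_le_tsum_norm (f := fun k => volterraTerm au Z t k ω - volterraTerm av Z t k ω)
                (by simpa [Real.norm_eq_abs] using habs)
        _ ≤ ∑' k, D k := Summable.tsum_le_tsum hDle habs hDsum
    calc ENNReal.ofReal |volterra au Z t ω - volterra av Z t ω|
        ≤ ENNReal.ofReal (∑' k, D k) := ENNReal.ofReal_le_ofReal hstep
      _ = ∑' k, ENNReal.ofReal (D k) := ENNReal.ofReal_tsum_of_nonneg hDnn hDsum
  -- lintegral of the dominating function
  have hlintD : ∫⁻ ω, (∑' k, ENNReal.ofReal (∑ g ∈ Fintype.piFinset (fun _ : Fin k => pF),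
      |au 0 * ∏ i, au ((g i : ℕ)) - av 0 * ∏ i, av ((g i : ℕ))|
        * ∏ i, Z (t - ∑ l ∈ Finset.Iic i, (g l : ℕ)) ω)) ∂μ
      ≤ ENNReal.ofReal (((∑' k, cseq k) + 1) * |u - v| ^ β) := by
    have hDmeas : ∀ k : ℕ, Measurable (fun ω =>
        ENNReal.ofReal (∑ g ∈ Fintype.piFinset (fun _ : Fin k => pF),
          |au 0 * ∏ i, au ((g i : ℕ)) - av 0 * ∏ i, av ((g i : ℕ))|
            * ∏ i, Z (t - ∑ l ∈ Finset.Iic i, (g l : ℕ)) ω)) :=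
      fun k => ENNReal.measurable_ofReal.comp (Finset.measurable_sum _ fun g _ =>
        (Finset.measurable_prod _ fun i _ => hZmeas _).const_mul _)
    rw [lintegral_tsum fun k => (hDmeas k).aemeasurable]
    calc ∑' k : ℕ, ∫⁻ ω, ENNReal.ofReal (∑ g ∈ Fintype.piFinset (fun _ : Fin k => pF),
            |au 0 * ∏ i, au ((g i : ℕ)) - av 0 * ∏ i, av ((g i : ℕ))|
              * ∏ i, Z (t - ∑ l ∈ Finset.Iic i, (g l : ℕ)) ω) ∂μ
        = ∑' k : ℕ, ENNReal.ofReal (∑ g ∈ Fintype.piFinset (fun _ : Fin k => pF),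
            |au 0 * ∏ i, au ((g i : ℕ)) - av 0 * ∏ i, av ((g i : ℕ))|) :=
          tsum_congr fun k => hLint k _ (fun g => abs_nonneg _)
      _ ≤ ∑' k : ℕ, ENNReal.ofReal (|u - v| ^ β * cseq k) :=
          ENNReal.tsum_le_tsum fun k => ENNReal.ofReal_le_ofReal (hDbar k)
      _ = ENNReal.ofReal (∑' k, |u - v| ^ β * cseq k) :=
          (ENNReal.ofReal_tsum_of_nonneg (fun k => mul_nonneg hA0 (hcseq0 k))
            (hcsum.mul_left _)).symm
      _ = ENNReal.ofReal (|u - v| ^ β * ∑' k, cseq k) := by rw [tsum_mul_left]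
      _ ≤ ENNReal.ofReal (((∑' k, cseq k) + 1) * |u - v| ^ β) :=
          ENNReal.ofReal_le_ofReal (by nlinarith)
  -- conclusion
  by_cases hI : Integrable (fun ω => |volterra au Z t ω - volterra av Z t ω|) μ
  · rw [integral_eq_lintegral_of_nonneg_ae (Filter.Eventually.of_forall fun ω => abs_nonneg _)
      hI.aestronglyMeasurable]
    refine ENNReal.toReal_le_of_le_ofReal (mul_nonneg (by linarith) hA0) ?_
    calc ∫⁻ ω, ENNReal.ofReal |volterra au Z t ω - volterra av Z t ω| ∂μ
        ≤ ∫⁻ ω, (∑' k, ENNReal.ofReal (∑ g ∈ Fintype.piFinset (fun _ : Fin k => pF),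
            |au 0 * ∏ i, au ((g i : ℕ)) - av 0 * ∏ i, av ((g i : ℕ))|
              * ∏ i, Z (t - ∑ l ∈ Finset.Iic i, (g l : ℕ)) ω)) ∂μ :=
          lintegral_mono_ae hptwise
      _ ≤ ENNReal.ofReal (((∑' k, cseq k) + 1) * |u - v| ^ β) := hlintD
  · rw [integral_undef hI]
    exact mul_nonneg (by linarith) hA0
end
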